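/- Change-of-variables identity for the admissibility integrand: for φ, ψ ∈ L¹(ℝ², ℍ) ∩ L²(ℝ², ℍ) and any ζ ∈ ℝ² with nonzero coordinates, ∫_{ℝ²} F_Q(conj(φ)ˇ)(A_ξ^{-1}(ζ - ξ)) conj(F_Q(conj(ψ)ˇ)(A_ξ^{-1}(ζ - ξ))) dμ₂(ξ)/|det A_ξ| = ∫_{ℝ²} F_Q(conj(φ))(1 - γ) conj(F_Q(conj(ψ))(1 - γ)) dμ₂(γ)/|det A_γ|, i.e., the left side is independent of ζ and equals C_{φ,ψ}. -/

import Mathlib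

open MeasureTheory Quaternion Set
noncomputable section

def Qi : ℍ[ℝ] := ⟨0,1,0,0⟩
def Qj : ℍ[ℝ] := ⟨0,0,1,0⟩
def qexp (q : ℍ[ℝ]) : ℍ[ℝ] := NormedSpace.exp q
/-- normalized Lebesgue measure on ℝ² -/
def μ2 : Measure (ℝ × ℝ) := (ENNReal.ofReal (2*Real.pi))⁻¹ • (volume : Measure (ℝ × ℝ))
/-- normalized Lebesgue measure on ℝ⁴ = ℝ²×ℝ² -/
def μ4 : Measure ((ℝ×ℝ) × (ℝ×ℝ)) :=
  ((ENNReal.ofReal (2*Real.pi))^2)⁻¹ • (volume : Measure ((ℝ×ℝ)×(ℝ×ℝ)))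
/-- two-sided quaternion Fourier transform -/
def QFT (f : ℝ×ℝ → ℍ[ℝ]) (u : ℝ×ℝ) : ℍ[ℝ] :=
  ∫ x, qexp (-(x.1*u.1) • Qi) * f x * qexp (-(x.2*u.2) • Qj) ∂μ2
/-- quaternion Stockwell transform with window φ -/
def Stock (φ f : ℝ×ℝ → ℍ[ℝ]) (ξ b : ℝ×ℝ) : ℍ[ℝ] :=
  Real.sqrt |ξ.1*ξ.2| • ∫ x, qexp (-(x.1*ξ.1) • Qi) * f x * qexp (-(x.2*ξ.2) • Qj)
    * star (φ (ξ.1*(x.1-b.1), ξ.2*(x.2-b.2))) ∂μ2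
def L2norm (f : ℝ×ℝ → ℍ[ℝ]) : ℝ := (∫ x, ‖f x‖^2 ∂μ2) ^ (1/2 : ℝ)
def L1L2 (f : ℝ×ℝ → ℍ[ℝ]) : Prop := Integrable f μ2 ∧ MemLp f 2 μ2
/-- hypotheses of the quaternion convolution theorem (commutation conditions) -/
def CommCond (φ : ℝ×ℝ → ℍ[ℝ]) : Prop := ∀ u v y : ℝ,
  QFT φ (u,v) * qexp (-(v*y) • Qj) = qexp (-(v*y) • Qj) * QFT φ (u,v) ∧
  QFT (fun x => Qj * φ x) (u,v) * qexp (-(v*y) • Qj)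
    = Qj * (qexp (-(v*y) • Qj) * QFT φ (u,v))
/-- admissibility constant C_φ -/
def Cphi (φ : ℝ×ℝ → ℍ[ℝ]) : ℝ :=
  ∫ ξ, ‖QFT (fun x => star (φ x)) (1-ξ.1, 1-ξ.2)‖^2 / |ξ.1*ξ.2| ∂μ2


/-- quaternionic admissibility constant C_{φ,ψ} -/
def Cpair (φ ψ : ℝ×ℝ → ℍ[ℝ]) : ℍ[ℝ] :=
  ∫ γ, |γ.1*γ.2|⁻¹ • (QFT (fun x => star (φ x)) (1-γ.1, 1-γ.2)
    * star (QFT (fun x => star (ψ x)) (1-γ.1, 1-γ.2))) ∂μ2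


lemma QFT_flip (φ : ℝ×ℝ → ℍ[ℝ]) (u : ℝ×ℝ) :
    QFT (fun x => star (φ (-x))) u = QFT (fun x => star (φ x)) (-u) := by
  unfold QFT μ2
  rw [integral_smul_measure, integral_smul_measure]
  congr 1
  rw [← integral_neg_eq_self
    (fun x : ℝ×ℝ => qexp (-(x.1*(-u).1) • Qi) * star (φ x) * qexp (-(x.2*(-u).2) • Qj)) volume]
  apply integral_congr_ae
  filter_upwards with x
  simp [neg_mul_neg]

lemma cov_main {F : Type*} [NormedAddCommGroup F] [NormedSpace ℝ F]
    (K : ℝ×ℝ → F) (ζ : ℝ×ℝ) (h1 : ζ.1 ≠ 0) (h2 : ζ.2 ≠ 0) :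
    (∫ ξ : ℝ×ℝ, |ξ.1*ξ.2|⁻¹ • K (-((ζ.1-ξ.1)/ξ.1), -((ζ.2-ξ.2)/ξ.2)) ∂volume)
      = ∫ γ : ℝ×ℝ, |γ.1*γ.2|⁻¹ • K (1-γ.1, 1-γ.2) ∂volume := by
  set s : Set (ℝ×ℝ) := {p | p.1 ≠ 0 ∧ p.2 ≠ 0} with hs_def
  have hclosed : MeasurableSet s := by
    have : s = (Prod.fst ⁻¹' ({0}ᶜ)) ∩ (Prod.snd ⁻¹' ({0}ᶜ)) := by
      ext p; simp [hs_def]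
    rw [this]
    exact ((isClosed_singleton.isOpen_compl).preimage continuous_fst).measurableSet.inter
      ((isClosed_singleton.isOpen_compl).preimage continuous_snd).measurableSet
  have hsc : volume sᶜ = 0 := by
    have hsub : sᶜ ⊆ (({0} : Set ℝ) ×ˢ (univ : Set ℝ)) ∪ ((univ : Set ℝ) ×ˢ ({0} : Set ℝ)) := by
      intro p hp
      simp only [hs_def, mem_compl_iff, mem_setOf_eq, not_and_or, not_not] at hp
      rcases hp with h | h
      · exact Or.inl (Set.mem_prod.2 ⟨h, Set.mem_univ _⟩)
      · exact Or.inr (Set.mem_prod.2 ⟨Set.mem_univ _, h⟩)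
    refine measure_mono_null hsub (measure_union_null ?_ ?_)
    · rw [show (volume : Measure (ℝ×ℝ)) = (volume : Measure ℝ).prod volume from rfl,
        Measure.prod_prod]
      simp
    · rw [show (volume : Measure (ℝ×ℝ)) = (volume : Measure ℝ).prod volume from rfl,
        Measure.prod_prod]
      simp
  have hae : ∀ᵐ p : ℝ×ℝ ∂volume, p ∈ s := by
    rw [ae_iff]; exact hsc
  set f : ℝ×ℝ → ℝ×ℝ := fun p => (ζ.1/p.1, ζ.2/p.2) with hf_def
  set B : ℝ×ℝ → (ℝ×ℝ) →L[ℝ] (ℝ×ℝ) := fun p =>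
    LinearMap.toContinuousLinearMap (Matrix.toLin (Module.Basis.finTwoProd ℝ) (Module.Basis.finTwoProd ℝ)
      !![-ζ.1/p.1^2, 0; 0, -ζ.2/p.2^2]) with hB_def
  have hB : ∀ p ∈ s, HasFDerivWithinAt f (B p) s p := by
    intro p hp
    apply HasFDerivAt.hasFDerivWithinAt
    rw [hB_def]
    simp only
    rw [Matrix.toLin_finTwoProd_toContinuousLinearMap]
    have d1 : HasDerivAt (fun t : ℝ => ζ.1/t) (-ζ.1/p.1^2) p.1 := by
      simpa only [div_eq_mul_inv, neg_div, mul_neg, ← neg_mul] using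
        (hasDerivAt_inv hp.1).const_mul ζ.1
    have d2 : HasDerivAt (fun t : ℝ => ζ.2/t) (-ζ.2/p.2^2) p.2 := by
      simpa only [div_eq_mul_inv, neg_div, mul_neg, ← neg_mul] using
        (hasDerivAt_inv hp.2).const_mul ζ.2
    have c1 : HasFDerivAt (fun q : ℝ×ℝ => ζ.1/q.1)
        ((-ζ.1/p.1^2) • ContinuousLinearMap.fst ℝ ℝ ℝ) p :=
      d1.comp_hasFDerivAt p hasFDerivAt_fst
    have c2 : HasFDerivAt (fun q : ℝ×ℝ => ζ.2/q.2)
        ((-ζ.2/p.2^2) • ContinuousLinearMap.snd ℝ ℝ ℝ) p :=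
      d2.comp_hasFDerivAt p hasFDerivAt_snd
    simpa only [zero_smul, add_zero, zero_add] using HasFDerivAt.prodMk c1 c2
  have hB_det : ∀ p, (B p).det = (-ζ.1/p.1^2) * (-ζ.2/p.2^2) := by
    intro p
    simp [hB_def, LinearMap.det_toContinuousLinearMap, LinearMap.det_toLin,
      Matrix.det_fin_two_of]
  have hinj : InjOn f s := by
    intro a ha b hb h
    have e1 : ζ.1/a.1 = ζ.1/b.1 := congrArg Prod.fst h
    have e2 : ζ.2/a.2 = ζ.2/b.2 := congrArg Prod.snd h
    have p1 : a.1 = b.1 := by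
      rw [div_eq_div_iff ha.1 hb.1] at e1
      exact (mul_left_cancel₀ h1 e1).symm
    have p2 : a.2 = b.2 := by
      rw [div_eq_div_iff ha.2 hb.2] at e2
      exact (mul_left_cancel₀ h2 e2).symm
    exact Prod.ext p1 p2
  have himg : f '' s = s := by
    apply Subset.antisymm
    · rintro _ ⟨p, hp, rfl⟩
      exact ⟨div_ne_zero h1 hp.1, div_ne_zero h2 hp.2⟩
    · intro p hp
      refine ⟨(ζ.1/p.1, ζ.2/p.2), ⟨div_ne_zero h1 hp.1, div_ne_zero h2 hp.2⟩, ?_⟩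
      rw [hf_def]
      have e1 : ζ.1 / (ζ.1/p.1) = p.1 := by field_simp
      have e2 : ζ.2 / (ζ.2/p.2) = p.2 := by field_simp
      simp only
      rw [e1, e2]
  calc (∫ ξ : ℝ×ℝ, |ξ.1*ξ.2|⁻¹ • K (-((ζ.1-ξ.1)/ξ.1), -((ζ.2-ξ.2)/ξ.2)) ∂volume)
      = ∫ ξ in s, |ξ.1*ξ.2|⁻¹ • K (-((ζ.1-ξ.1)/ξ.1), -((ζ.2-ξ.2)/ξ.2)) ∂volume := by
        rw [Measure.restrict_eq_self_of_ae_mem hae]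
    _ = ∫ ξ in s, |(B ξ).det| • (fun γ : ℝ×ℝ => |γ.1*γ.2|⁻¹ • K (1-γ.1, 1-γ.2)) (f ξ) ∂volume := by
        apply setIntegral_congr_fun hclosed
        intro p hp
        simp only [hf_def, hB_det, smul_smul]
        congr 1
        · have hx : ζ.1/p.1 * (ζ.2/p.2) ≠ 0 :=
            mul_ne_zero (div_ne_zero h1 hp.1) (div_ne_zero h2 hp.2)
          rw [← abs_inv (ζ.1 / p.1 * (ζ.2 / p.2)), ← abs_mul, ← abs_inv (p.1*p.2)]
          congr 1
          have hq1 := hp.1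
          have hq2 := hp.2
          field_simp
        · rw [one_sub_div hp.1, one_sub_div hp.2, ← neg_div, ← neg_div, neg_sub, neg_sub]
    _ = ∫ γ in f '' s, |γ.1*γ.2|⁻¹ • K (1-γ.1, 1-γ.2) ∂volume :=
        (integral_image_eq_integral_abs_det_fderiv_smul volume hclosed hB hinj (fun γ : ℝ×ℝ => |γ.1*γ.2|⁻¹ • K (1-γ.1, 1-γ.2))).symm
    _ = ∫ γ in s, |γ.1*γ.2|⁻¹ • K (1-γ.1, 1-γ.2) ∂volume := by rw [himg]
    _ = ∫ γ : ℝ×ℝ, |γ.1*γ.2|⁻¹ • K (1-γ.1, 1-γ.2) ∂volume := by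
        rw [Measure.restrict_eq_self_of_ae_mem hae]

theorem admissibility_change_of_variables (φ ψ : ℝ×ℝ → ℍ[ℝ])
    (hφ : L1L2 φ) (hψ : L1L2 ψ) (ζ : ℝ×ℝ) (h1 : ζ.1 ≠ 0) (h2 : ζ.2 ≠ 0) :
    (∫ ξ, |ξ.1*ξ.2|⁻¹ • (QFT (fun x => star (φ (-x))) ((ζ.1-ξ.1)/ξ.1, (ζ.2-ξ.2)/ξ.2)
        * star (QFT (fun x => star (ψ (-x))) ((ζ.1-ξ.1)/ξ.1, (ζ.2-ξ.2)/ξ.2))) ∂μ2)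
      = Cpair φ ψ := by
  simp only [QFT_flip, Prod.neg_mk]
  unfold Cpair μ2
  rw [integral_smul_measure, integral_smul_measure]
  congr 1
  exact cov_main (fun u => QFT (fun x => star (φ x)) u * star (QFT (fun x => star (ψ x)) u))
    ζ h1 h2
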